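/- arXiv:2006.08277 — 2 statements merged into one kernel-verified Lean document; each statement's English description precedes it below -/
import Mathlib

section
/- If E is an equivalence relation on Cantor space 2^ℕ that, as a subset of 2^ℕ × 2^ℕ, has the Baire property and is non-meager, then E is not disjoint from G₀; that is, there exist distinct E-equivalent points x, y with (x, y) ∈ G₀. -/
open Filter Topology
open Set

/-- Concatenation of a finite binary string with a point of Cantor space. -/
def cat01 (l : List Bool) (c : ℕ → Bool) : ℕ → Bool :=
  fun k => if h : k < l.length then l.get ⟨k, h⟩ else c (k - l.length)

/-- The digraph `G₀` on Cantor space determined by the sequence of strings `s`. -/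
def G0 (s : ℕ → List Bool) : Set ((ℕ → Bool) × (ℕ → Bool)) :=
  {p | ∃ n : ℕ, ∃ c : ℕ → Bool,
    p = (cat01 (s n ++ [false]) c, cat01 (s n ++ [true]) c)}

/-- Cylinder set. -/
def Cyl (l : List Bool) : Set (ℕ → Bool) := {x | ∀ i : Fin l.length, x i = l.get i}

lemma isOpen_Cyl (l : List Bool) : IsOpen (Cyl l) := by
  have : Cyl l = ⋂ i : Fin l.length, {x : ℕ → Bool | x i = l.get i} := by
    ext x; simp [Cyl]
  rw [this]
  refine isOpen_iInter_of_finite fun i => ?_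
  have : {x : ℕ → Bool | x i = l.get i} = (fun x : ℕ → Bool => x (i : ℕ)) ⁻¹' {l.get i} := rfl
  rw [this]
  exact (isOpen_discrete _).preimage (continuous_apply (i : ℕ))

lemma cat01_mem_Cyl (l : List Bool) (c : ℕ → Bool) : cat01 l c ∈ Cyl l := by
  intro i; simp [cat01, i.isLt]

lemma Cyl_mono {l l' : List Bool} (h : l <+: l') : Cyl l' ⊆ Cyl l := by
  obtain ⟨t, rfl⟩ := h
  intro x hx i
  have := hx ⟨i, by simp; omega⟩
  simp only [List.get_eq_getElem] at this ⊢
  rwa [List.getElem_append_left] at this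

lemma exists_cyl_subset {A : Set (ℕ → Bool)} (hA : IsOpen A) {a : ℕ → Bool} (ha : a ∈ A) :
    ∃ m : ℕ, Cyl (List.ofFn fun i : Fin m => a i) ⊆ A := by
  rw [isOpen_pi_iff] at hA
  obtain ⟨I, u, hu, hsub⟩ := hA a ha
  refine ⟨(I.sup id) + 1, fun x hx => hsub ?_⟩
  intro i hi
  have hil : (i : ℕ) < (I.sup id) + 1 := Nat.lt_succ_of_le (Finset.le_sup (f := id) hi)
  have := hx ⟨i, by simpa using hil⟩
  simp only [List.get_ofFn] at this
  simp only [this]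
  exact (hu i hi).2

lemma dense_slice_residual {X Y : Type*} [TopologicalSpace X] [TopologicalSpace Y]
    [SecondCountableTopology Y] {D : Set (X × Y)} (hDo : IsOpen D)
    (hDd : Dense D) : {x : X | Dense {y : Y | (x, y) ∈ D}} ∈ residual X := by
  obtain ⟨b, hbc, hbne, hb⟩ := TopologicalSpace.exists_countable_basis Y
  have hWo : ∀ V ∈ b, IsOpen {x : X | ∃ y ∈ V, (x, y) ∈ D} := by
    intro V hV
    have : {x : X | ∃ y ∈ V, (x, y) ∈ D} = Prod.fst '' (D ∩ univ ×ˢ V) := by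
      ext x
      simp only [mem_setOf_eq, mem_image, mem_inter_iff, mem_prod, mem_univ, true_and,
        Prod.exists]
      exact ⟨fun ⟨y, hy, hD⟩ => ⟨x, y, ⟨hD, hy⟩, rfl⟩,
        fun ⟨a, y, ⟨hD, hy⟩, h⟩ => by subst h; exact ⟨y, hy, hD⟩⟩
    rw [this]
    exact isOpenMap_fst _ (hDo.inter (isOpen_univ.prod (hb.isOpen hV)))
  have hWd : ∀ V ∈ b, Dense {x : X | ∃ y ∈ V, (x, y) ∈ D} := by
    intro V hV
    rw [dense_iff_inter_open]
    intro A hAo hAne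
    have hVne : V.Nonempty := nonempty_iff_ne_empty.2 (fun h => hbne (h ▸ hV))
    obtain ⟨p, hpAV, hpD⟩ := hDd.inter_open_nonempty (A ×ˢ V) (hAo.prod (hb.isOpen hV))
      (hAne.prod hVne)
    exact ⟨p.1, hpAV.1, p.2, hpAV.2, hpD⟩
  refine mem_of_superset ((countable_bInter_mem hbc).2 fun V hV =>
    residual_of_dense_open (hWo V hV) (hWd V hV)) fun x hx => ?_
  simp only [mem_iInter, mem_setOf_eq] at hx
  show Dense {y : Y | (x, y) ∈ D}
  rw [hb.dense_iff]
  intro o ho hone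
  obtain ⟨y, hyV, hyD⟩ := hx o ho
  exact ⟨y, hyV, hyD⟩

lemma ku_slice {X Y : Type*} [TopologicalSpace X] [TopologicalSpace Y]
    [SecondCountableTopology Y]
    {S : Set (X × Y)} (hS : S ∈ residual (X × Y)) :
    {x : X | {y : Y | (x, y) ∈ S} ∈ residual Y} ∈ residual X := by
  rw [mem_residual_iff] at hS
  obtain ⟨T, hTo, hTd, hTc, hTsub⟩ := hS
  refine mem_of_superset ((countable_bInter_mem hTc).2 fun D hD =>
    dense_slice_residual (hTo D hD) (hTd D hD)) fun x hx => ?_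
  simp only [mem_iInter, mem_setOf_eq] at hx ⊢
  have h1 : (⋂ D ∈ T, {y : Y | (x, y) ∈ D}) ∈ residual Y :=
    (countable_bInter_mem hTc).2 fun D hD =>
      residual_of_dense_open ((hTo D hD).preimage (Continuous.prodMk_right x)) (hx D hD)
  refine mem_of_superset h1 fun y hy => hTsub fun D hD => ?_
  exact mem_iInter₂.1 hy D hD

lemma cat01_continuous (l : List Bool) : Continuous (cat01 l) := by
  refine continuous_pi fun k => ?_
  by_cases h : k < l.length
  · simpa only [cat01, dif_pos h] using continuous_const
  · simpa only [cat01, dif_neg h] using continuous_apply (k - l.length)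

lemma cat01_injective (l : List Bool) : Function.Injective (cat01 l) := by
  intro c c' h
  funext k
  have := congrFun h (k + l.length)
  simpa only [cat01, dif_neg (by omega : ¬ k + l.length < l.length),
    Nat.add_sub_cancel] using this

lemma cat01_range (l : List Bool) : Set.range (cat01 l) = Cyl l := by
  apply subset_antisymm
  · rintro _ ⟨c, rfl⟩; exact cat01_mem_Cyl l c
  · intro x hx
    refine ⟨fun k => x (k + l.length), funext fun k => ?_⟩
    by_cases h : k < l.length
    · simpa only [cat01, dif_pos h] using (hx ⟨k, h⟩).symm
    · simp only [cat01, dif_neg h, Nat.sub_add_cancel (Nat.le_of_not_lt h)]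

lemma cat01_isOpenMap (l : List Bool) : IsOpenMap (cat01 l) :=
  ((cat01_continuous l).isClosedEmbedding
    (cat01_injective l)).isEmbedding.isInducing.isOpenMap
    (by rw [cat01_range]; exact isOpen_Cyl l)

/-- A non-meager equivalence relation on Cantor space with the Baire property
is not disjoint from `G₀`. -/
theorem stmt_1 (s : ℕ → List Bool)
    (hlen : ∀ n, (s n).length = n)
    (hdense : ∀ l : List Bool, ∃ n, l <+: s n)
    (E : (ℕ → Bool) → (ℕ → Bool) → Prop) (hE : Equivalence E)
    (hBP : ∃ U : Set ((ℕ → Bool) × (ℕ → Bool)), IsOpen U ∧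
      IsMeagre (symmDiff {p : (ℕ → Bool) × (ℕ → Bool) | E p.1 p.2} U))
    (hnm : ¬ IsMeagre {p : (ℕ → Bool) × (ℕ → Bool) | E p.1 p.2}) :
    ∃ x y : ℕ → Bool, x ≠ y ∧ E x y ∧ (x, y) ∈ G0 s := by
  set S : Set ((ℕ → Bool) × (ℕ → Bool)) := {p | E p.1 p.2} with hSdef
  obtain ⟨U, hUo, hUm⟩ := hBP
  have hUne : U.Nonempty := by
    rw [nonempty_iff_ne_empty]
    rintro rfl
    refine hnm (hUm.mono fun p hp => ?_)
    simp [symmDiff_def, hp]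
  obtain ⟨⟨a, b⟩, hab⟩ := hUne
  rw [isOpen_prod_iff] at hUo
  obtain ⟨A, B, hAo, hBo, haA, hbB, hABU⟩ := hUo a b hab
  obtain ⟨mu, hu⟩ := exists_cyl_subset hAo haA
  obtain ⟨mv, hv⟩ := exists_cyl_subset hBo hbB
  set u : List Bool := List.ofFn fun i : Fin mu => a i with hudef
  set v : List Bool := List.ofFn fun i : Fin mv => b i with hvdef
  -- the bad set inside the box is meager
  have hM : IsMeagre ((Cyl u ×ˢ Cyl v) \ S) := by
    refine hUm.mono fun p hp => ?_
    have hpU : p ∈ U := hABU ⟨hu hp.1.1, hv hp.1.2⟩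
    simp only [symmDiff_def, Set.sup_eq_union, Set.mem_union]
    exact Or.inr ⟨hpU, hp.2⟩
  have hMc : ((Cyl u ×ˢ Cyl v) \ S)ᶜ ∈ residual ((ℕ → Bool) × (ℕ → Bool)) := hM
  have hku := ku_slice hMc
  set A0 : Set (ℕ → Bool) :=
    {x | {y : ℕ → Bool | (x, y) ∈ ((Cyl u ×ˢ Cyl v) \ S)ᶜ} ∈ residual (ℕ → Bool)} with hA0def
  -- any two points of A0 lying in Cyl u are E-equivalent
  have key : ∀ x ∈ A0, ∀ x' ∈ A0, x ∈ Cyl u → x' ∈ Cyl u → E x x' := by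
    intro x hx x' hx' hxu hx'u
    have hres : ({y : ℕ → Bool | (x, y) ∈ ((Cyl u ×ˢ Cyl v) \ S)ᶜ} ∩
        {y : ℕ → Bool | (x', y) ∈ ((Cyl u ×ˢ Cyl v) \ S)ᶜ}) ∈ residual (ℕ → Bool) :=
      inter_mem hx hx'
    have hvne : (Cyl v).Nonempty := ⟨cat01 v (fun _ => false), cat01_mem_Cyl v _⟩
    obtain ⟨y, hyv, hy1, hy2⟩ :=
      (dense_of_mem_residual hres).inter_open_nonempty (Cyl v) (isOpen_Cyl v) hvne
    have hxy : E x y := by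
      by_contra h
      exact hy1 ⟨⟨hxu, hyv⟩, h⟩
    have hx'y : E x' y := by
      by_contra h
      exact hy2 ⟨⟨hx'u, hyv⟩, h⟩
    exact hE.trans hxy (hE.symm hx'y)
  obtain ⟨n, hn⟩ := hdense u
  have hpre : ∀ bb : Bool, u <+: s n ++ [bb] := fun bb => hn.trans (List.prefix_append _ _)
  have hA0m : IsMeagre A0ᶜ := by rw [IsMeagre, compl_compl]; exact hku
  have hpm : ∀ bb : Bool, (cat01 (s n ++ [bb]) ⁻¹' A0) ∈ residual (ℕ → Bool) := by
    intro bb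
    have := hA0m.preimage_of_isOpenMap (cat01_continuous (s n ++ [bb]))
      (cat01_isOpenMap (s n ++ [bb]))
    rwa [IsMeagre, Set.preimage_compl, compl_compl] at this
  obtain ⟨c, hc0, hc1⟩ :=
    (dense_of_mem_residual (inter_mem (hpm false) (hpm true))).nonempty
  refine ⟨cat01 (s n ++ [false]) c, cat01 (s n ++ [true]) c, ?_, ?_, ⟨n, c, rfl⟩⟩
  · have hcoord : ∀ bb : Bool, cat01 (s n ++ [bb]) c n = bb := by
      intro bb
      have hl : n < (s n ++ [bb]).length := by simp [hlen n]
      simp only [cat01, dif_pos hl, List.get_eq_getElem]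
      rw [List.getElem_append_right (by simp [hlen n])]
      simp [hlen n]
    intro h
    have := congrFun h n
    rw [hcoord false, hcoord true] at this
    exact Bool.false_ne_true this
  · exact key _ hc0 _ hc1
      (Cyl_mono (hpre false) (cat01_mem_Cyl _ c))
      (Cyl_mono (hpre true) (cat01_mem_Cyl _ c))
end

section
/- The digraph G₀ on Cantor space has no Baire-measurable countable coloring: there is no function c : 2^ℕ → ℕ such that each fiber c⁻¹({n}) has the Baire property and is G₀-independent. -/
open Filter Topology

open Set

/-- Flip the value at coordinate `m`. -/
def flipAt (m : ℕ) (y : ℕ → Bool) : ℕ → Bool :=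
  fun k => if k = m then !(y k) else y k

lemma flipAt_invol (m : ℕ) (y : ℕ → Bool) : flipAt m (flipAt m y) = y := by
  funext k
  by_cases h : k = m <;> simp [flipAt, h]

lemma continuous_flipAt (m : ℕ) : Continuous (flipAt m) := by
  apply continuous_pi
  intro k
  by_cases h : k = m
  · simpa [flipAt, h, Function.comp_def] using (continuous_of_discreteTopology (f := Bool.not)).comp
      (continuous_apply m)
  · simpa [flipAt, h] using continuous_apply k

/-- `flipAt m` as a homeomorphism. -/
def flipH (m : ℕ) : (ℕ → Bool) ≃ₜ (ℕ → Bool) where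
  toFun := flipAt m
  invFun := flipAt m
  left_inv := flipAt_invol m
  right_inv := flipAt_invol m
  continuous_toFun := continuous_flipAt m
  continuous_invFun := continuous_flipAt m

lemma cat01_lt {l : List Bool} (c : ℕ → Bool) {k : ℕ} (h : k < l.length) :
    cat01 l c k = l[k] := by simp [cat01, h]

lemma cat01_ge {l : List Bool} (c : ℕ → Bool) {k : ℕ} (h : l.length ≤ k) :
    cat01 l c k = c (k - l.length) := by
  have : ¬ k < l.length := by omega
  simp [cat01, this]

lemma range_cat01 (l : List Bool) :
    Set.range (cat01 l) = PiNat.cylinder (cat01 l (fun _ => false)) l.length := by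
  ext y
  constructor
  · rintro ⟨d, rfl⟩
    rw [PiNat.mem_cylinder_iff]
    intro i hi
    rw [cat01_lt _ hi, cat01_lt _ hi]
  · intro hy
    rw [PiNat.mem_cylinder_iff] at hy
    refine ⟨fun k => y (k + l.length), ?_⟩
    funext k
    by_cases h : k < l.length
    · rw [cat01_lt _ h, hy k h, cat01_lt _ h]
    · rw [cat01_ge _ (by omega)]
      congr 1
      omega

lemma mem_range_cat01 {l : List Bool} {y : ℕ → Bool}
    (h : ∀ i, (hi : i < l.length) → y i = l[i]) : y ∈ Set.range (cat01 l) := by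
  rw [range_cat01, PiNat.mem_cylinder_iff]
  intro i hi
  rw [cat01_lt _ hi]
  exact h i hi

lemma flipAt_cat01 {m : ℕ} {t : List Bool} (ht : t.length = m) (d : ℕ → Bool) :
    flipAt m (cat01 (t ++ [false]) d) = cat01 (t ++ [true]) d := by
  have hlen : (t ++ [false]).length = m + 1 := by simp [ht]
  have hlen' : (t ++ [true]).length = m + 1 := by simp [ht]
  funext k
  rcases lt_trichotomy k m with hk | hk | hk
  · have h1 : k < (t ++ [false]).length := by omega
    have h2 : k < (t ++ [true]).length := by omega
    have hkt : k < t.length := by omega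
    rw [show flipAt m (cat01 (t ++ [false]) d) k = cat01 (t ++ [false]) d k by
      simp [flipAt, Nat.ne_of_lt hk]]
    rw [cat01_lt _ h1, cat01_lt _ h2, List.getElem_append_left hkt,
      List.getElem_append_left hkt]
  · subst hk
    have h1 : k < (t ++ [false]).length := by omega
    have h2 : k < (t ++ [true]).length := by omega
    have hr1 : (t ++ [false])[k] = false := by
      rw [List.getElem_append_right (by omega)]; simp [ht]
    have hr2 : (t ++ [true])[k] = true := by
      rw [List.getElem_append_right (by omega)]; simp [ht]
    rw [show flipAt k (cat01 (t ++ [false]) d) k = !(cat01 (t ++ [false]) d k) by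
      simp [flipAt]]
    rw [cat01_lt _ h1, cat01_lt _ h2, hr1, hr2]
    rfl
  · have h1 : (t ++ [false]).length ≤ k := by omega
    have h2 : (t ++ [true]).length ≤ k := by omega
    rw [show flipAt m (cat01 (t ++ [false]) d) k = cat01 (t ++ [false]) d k by
      simp [flipAt, Nat.ne_of_gt hk]]
    rw [cat01_ge _ h1, cat01_ge _ h2, hlen, hlen']

lemma isMeagre_union {X : Type*} [TopologicalSpace X] {s t : Set X}
    (hs : IsMeagre s) (ht : IsMeagre t) : IsMeagre (s ∪ t) := by
  rw [IsMeagre, Set.compl_union]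
  exact Filter.inter_mem hs ht

lemma not_isMeagre_of_isOpen' {X : Type*} [TopologicalSpace X] [BaireSpace X]
    {U : Set X} (hU : IsOpen U) (hne : U.Nonempty) : ¬ IsMeagre U := by
  intro h
  have hd : Dense Uᶜ := dense_of_mem_residual h
  obtain ⟨x, hx1, hx2⟩ := hd.inter_open_nonempty U hU hne
  exact hx2 hx1

/-- `G₀` has no Baire-measurable countable coloring. -/
theorem stmt_11 (s : ℕ → List Bool)
    (hlen : ∀ n, (s n).length = n)
    (hdense : ∀ l : List Bool, ∃ n, l <+: s n) :
    ¬ ∃ c : (ℕ → Bool) → ℕ, ∀ n : ℕ,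
      (∃ U : Set (ℕ → Bool), IsOpen U ∧ IsMeagre (symmDiff (c ⁻¹' {n}) U)) ∧
      (∀ x ∈ c ⁻¹' {n}, ∀ y ∈ c ⁻¹' {n}, (x, y) ∉ G0 s) := by
  rintro ⟨c, hc⟩
  -- some fiber is non-meager
  obtain ⟨n, hn⟩ : ∃ n, ¬ IsMeagre (c ⁻¹' {n}) := by
    by_contra h
    push_neg at h
    have hcover : (⋃ n, c ⁻¹' {n}) = (univ : Set (ℕ → Bool)) := by
      ext x; simp
    have : IsMeagre (univ : Set (ℕ → Bool)) := hcover ▸ isMeagre_iUnion h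
    exact not_isMeagre_of_isOpen' isOpen_univ ⟨fun _ => false, trivial⟩ this
  obtain ⟨⟨U, hU, hM⟩, hind⟩ := hc n
  set A : Set (ℕ → Bool) := c ⁻¹' {n} with hA
  -- U is nonempty
  have hUne : U.Nonempty := by
    rcases U.eq_empty_or_nonempty with rfl | h
    · exact absurd (by simpa [symmDiff] using hM) hn
    · exact h
  obtain ⟨x, hx⟩ := hUne
  -- find a cylinder inside U
  obtain ⟨v, ⟨y, k, rfl⟩, hxv, hvU⟩ :=
    (PiNat.isTopologicalBasis_cylinders (fun _ : ℕ => Bool)).exists_subset_of_mem_open hx hU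
  -- a string extending the cylinder's base
  obtain ⟨m, hm⟩ := hdense (List.ofFn fun i : Fin k => y i)
  have hkm : k ≤ m := by
    have := hm.length_le
    simpa [hlen] using this
  obtain ⟨u, hu⟩ := hm
  -- both cylinders [s m ++ [b]] are inside U
  have hsub : ∀ b : Bool, Set.range (cat01 (s m ++ [b])) ⊆ U := by
    intro b z hz
    apply hvU
    rw [PiNat.mem_cylinder_iff]
    intro i hi
    obtain ⟨d, rfl⟩ := hz
    have hik : i < (List.ofFn fun j : Fin k => y j).length := by simpa using hi
    have him : i < (s m ++ [b]).length := by
      simp [hlen]; omega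
    rw [cat01_lt _ him]
    have he : s m ++ [b] = (List.ofFn fun j : Fin k => y j) ++ (u ++ [b]) := by
      rw [← hu, List.append_assoc]
    rw [List.getElem_of_eq he him, List.getElem_append_left hik]
    simp
  set M : Set (ℕ → Bool) := symmDiff A U with hMdef
  -- the flipped meager set
  have hM' : IsMeagre ((flipAt m) ⁻¹' M) :=
    hM.preimage_of_isOpenMap (continuous_flipAt m) (flipH m).isOpenMap
  -- find a point of [s m ++ [false]] avoiding M and flip⁻¹ M
  have hCopen : IsOpen (Set.range (cat01 (s m ++ [false]))) := by
    rw [range_cat01]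
    exact PiNat.isOpen_cylinder _ _ _
  have hCne : (Set.range (cat01 (s m ++ [false]))).Nonempty :=
    ⟨_, ⟨fun _ => false, rfl⟩⟩
  have hexists : (Set.range (cat01 (s m ++ [false])) \ (M ∪ (flipAt m) ⁻¹' M)).Nonempty := by
    by_contra h
    rw [Set.not_nonempty_iff_eq_empty, Set.diff_eq_empty] at h
    exact not_isMeagre_of_isOpen' hCopen hCne ((isMeagre_union hM hM').mono h)
  obtain ⟨z, hzC, hzM⟩ := hexists
  obtain ⟨d, rfl⟩ := hzC
  have hz1 : cat01 (s m ++ [false]) d ∈ A := by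
    have hzU : cat01 (s m ++ [false]) d ∈ U := hsub false ⟨d, rfl⟩
    by_contra hzA
    exact hzM (Or.inl (by simp [hMdef, symmDiff, hzU, hzA]))
  have hflip : flipAt m (cat01 (s m ++ [false]) d) = cat01 (s m ++ [true]) d :=
    flipAt_cat01 (hlen m) d
  have hz2 : cat01 (s m ++ [true]) d ∈ A := by
    have hzU : cat01 (s m ++ [true]) d ∈ U := hsub true ⟨d, rfl⟩
    by_contra hzA
    exact hzM (Or.inr (by simp only [Set.mem_preimage, hflip]
                          simp [hMdef, symmDiff, hzU, hzA]))
  exact hind _ hz1 _ hz2 ⟨m, d, rfl⟩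
end
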